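/- Fix a natural number N, and reals μ > 0 and x > 0. For each natural number ℓ ≥ 2 set ν = ℓ + 1 and define G(ℓ) = ((N + ν)·Γ(N + 1 + ν + μℓ)·Γ(N + ν)·e^{2ν}·x^ν) / (N!·ν·Γ(N + 1 + μℓ)·Γ(ν)²·ν^{2ν}), where Γ is the real Gamma function. Then the quantity log G(ℓ) − [ −2ℓ·log ℓ + ℓ·(2 − μ·log μ + (1+μ)·log(1+μ) + log x) + (N − 3/2)·log ℓ ] remains bounded as ℓ → ∞. -/

import Mathlib

open Real


open Real Finset

section helpers

noncomputable def PhiS (y : ℝ) : ℝ := (y - 1/2) * Real.log y - y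

private lemma mono_aux {f g : ℝ → ℝ} (hc : ContinuousOn f (Set.Ici 1))
    (hd : ∀ t : ℝ, 1 < t → HasDerivAt f (g t) t)
    (hg : ∀ t : ℝ, 1 < t → 0 ≤ g t) : MonotoneOn f (Set.Ici 1) := by
  apply monotoneOn_of_deriv_nonneg (convex_Ici 1) hc
  · intro t ht
    rw [interior_Ici] at ht
    exact (hd t ht).differentiableAt.differentiableWithinAt
  · intro t ht
    rw [interior_Ici] at ht
    rw [(hd t ht).deriv]
    exact hg t ht

lemma log_le_half_sub {x : ℝ} (hx : 1 ≤ x) : Real.log x ≤ (x - x⁻¹) / 2 := by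
  have key : MonotoneOn (fun t : ℝ => (t - t⁻¹) / 2 - Real.log t) (Set.Ici 1) := by
    apply mono_aux
    · apply ContinuousOn.sub
      · exact ((continuousOn_id.sub (continuousOn_id.inv₀ (fun t ht =>
          ne_of_gt (lt_of_lt_of_le one_pos ht)))).div_const 2)
      · exact Real.continuousOn_log.mono (fun t ht => by
          simp only [Set.mem_compl_iff, Set.mem_singleton_iff]
          exact ne_of_gt (lt_of_lt_of_le one_pos ht))
    · intro t ht
      have ht0 : (0:ℝ) < t := lt_trans one_pos ht
      exact (((hasDerivAt_id t).sub (hasDerivAt_inv (ne_of_gt ht0))).div_const 2).sub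
        (Real.hasDerivAt_log (ne_of_gt ht0))
    · intro t ht
      have ht0 : (0:ℝ) < t := lt_trans one_pos ht
      have : (1 - -(t^2)⁻¹) / 2 - t⁻¹ = (t-1)^2 / (2*t^2) := by field_simp; ring
      rw [this]
      positivity
  have h1 := key (Set.self_mem_Ici) (Set.mem_Ici.mpr hx) hx
  simp only [Real.log_one, inv_one] at h1
  norm_num at h1
  linarith

lemma half_harmonic_le_log {x : ℝ} (hx : 1 ≤ x) : 2*(x-1)/(x+1) ≤ Real.log x := by
  have key : MonotoneOn (fun t : ℝ => Real.log t - 2*(t-1)/(t+1)) (Set.Ici 1) := by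
    apply mono_aux
    · apply ContinuousOn.sub
      · exact Real.continuousOn_log.mono (fun t ht => by
          simp only [Set.mem_compl_iff, Set.mem_singleton_iff]
          exact ne_of_gt (lt_of_lt_of_le one_pos ht))
      · exact (continuousOn_const.mul (continuousOn_id.sub continuousOn_const)).div
          (continuousOn_id.add continuousOn_const)
          (fun t ht => by have h1 : (1:ℝ) ≤ t := ht; exact ne_of_gt (by linarith))
    · intro t ht
      have ht0 : (0:ℝ) < t := lt_trans one_pos ht
      have htn : t + 1 ≠ 0 := by intro h; linarith
      have h1 : HasDerivAt (fun t : ℝ => 2*(t-1)) 2 t := by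
        simpa using ((hasDerivAt_id t).sub_const 1).const_mul 2
      have h2 : HasDerivAt (fun t : ℝ => t+1) 1 t := (hasDerivAt_id t).add_const 1
      exact (Real.hasDerivAt_log (ne_of_gt ht0)).sub (h1.div h2 htn)
    · intro t ht
      have ht0 : (0:ℝ) < t := lt_trans one_pos ht
      have htn : (0:ℝ) < t + 1 := by linarith
      have : t⁻¹ - (2*(t+1) - 2*(t-1)*1)/(t+1)^2 = (t-1)^2 / (t*(t+1)^2) := by
        field_simp; ring
      rw [this]
      positivity
  have h1 := key (Set.self_mem_Ici) (Set.mem_Ici.mpr hx) hx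
  simp only [Real.log_one] at h1
  norm_num at h1
  linarith

lemma delta_nonneg {a : ℝ} (ha : 1 ≤ a) :
    0 ≤ (a + 1/2) * (Real.log (a+1) - Real.log a) - 1 := by
  have ha0 : (0:ℝ) < a := by linarith
  have hx1 : 1 ≤ (a+1)/a := by rw [le_div_iff₀ ha0]; linarith
  have h := half_harmonic_le_log hx1
  rw [Real.log_div (by linarith) (ne_of_gt ha0)] at h
  have he : 2*((a+1)/a-1)/((a+1)/a+1) = 2/(2*a+1) := by
    rw [div_eq_div_iff (by positivity) (by positivity)]
    field_simp
    ring
  rw [he] at h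
  have heq : (a + 1/2) * (2/(2*a+1)) = 1 := by
    field_simp
  nlinarith [mul_le_mul_of_nonneg_left h (show (0:ℝ) ≤ a + 1/2 by linarith)]

lemma delta_le {a : ℝ} (ha : 1 ≤ a) :
    (a + 1/2) * (Real.log (a+1) - Real.log a) - 1 ≤ 1/(4*a*(a+1)) := by
  have ha0 : (0:ℝ) < a := by linarith
  have hx1 : 1 ≤ (a+1)/a := by rw [le_div_iff₀ ha0]; linarith
  have h := log_le_half_sub hx1
  rw [Real.log_div (by linarith) (ne_of_gt ha0)] at h
  have he : ((a+1)/a - ((a+1)/a)⁻¹)/2 = (2*a+1)/(2*a*(a+1)) := by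
    rw [inv_div]
    rw [div_eq_div_iff (by norm_num) (by positivity)]
    field_simp
    ring
  rw [he] at h
  have heq : (a + 1/2) * ((2*a+1)/(2*a*(a+1))) = 1 + 1/(4*a*(a+1)) := by
    field_simp
    ring
  nlinarith [mul_le_mul_of_nonneg_left h (show (0:ℝ) ≤ a + 1/2 by linarith)]

lemma logGamma_add_nat {f : ℝ} (hf : 0 < f) (m : ℕ) :
    Real.log (Real.Gamma (f + m)) =
      Real.log (Real.Gamma f) + ∑ k ∈ Finset.range m, Real.log (f + k) := by
  induction m with
  | zero => simp
  | succ n ih =>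
    have h2 : (0:ℝ) < f + n := by positivity
    have h1 : f + ((n + 1 : ℕ) : ℝ) = (f + (n:ℝ)) + 1 := by push_cast; ring
    rw [h1, Real.Gamma_add_one (ne_of_gt h2),
      Real.log_mul (ne_of_gt h2) (ne_of_gt (Real.Gamma_pos_of_pos h2)),
      Finset.sum_range_succ, ih]
    ring

lemma phiS_add_nat (f : ℝ) (m : ℕ) :
    PhiS (f + m) = PhiS f + ∑ k ∈ Finset.range m,
      (Real.log (f + k) +
        (((f + k) + 1/2) * (Real.log ((f + k) + 1) - Real.log (f + k)) - 1)) := by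
  induction m with
  | zero => simp
  | succ n ih =>
    have h1 : f + ((n + 1 : ℕ) : ℝ) = (f + (n:ℝ)) + 1 := by push_cast; ring
    rw [h1, Finset.sum_range_succ, ← add_assoc, ← ih]
    unfold PhiS
    ring

lemma logGamma_small_ub {f : ℝ} (hf1 : 1 ≤ f) (hf2 : f ≤ 2) :
    Real.log (Real.Gamma f) ≤ 0 := by
  have h := Real.convexOn_log_Gamma.2 (Set.mem_Ioi.mpr one_pos)
    (Set.mem_Ioi.mpr two_pos) (show (0:ℝ) ≤ 2 - f by linarith)
    (show (0:ℝ) ≤ f - 1 by linarith) (by ring)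
  have e : (2-f) • (1:ℝ) + (f-1) • (2:ℝ) = f := by
    rw [smul_eq_mul, smul_eq_mul]; ring
  rw [e] at h
  simpa [Function.comp, Real.Gamma_one, Real.Gamma_two, smul_eq_mul] using h

lemma logGamma_small_lb {f : ℝ} (hf1 : 1 ≤ f) (hf2 : f ≤ 2) :
    -1 ≤ Real.log (Real.Gamma f) := by
  have hf0 : (0:ℝ) < f := by linarith
  have h := Real.convexOn_log_Gamma.2 (Set.mem_Ioi.mpr hf0)
    (Set.mem_Ioi.mpr (show (0:ℝ) < f + 1 by linarith))
    (show (0:ℝ) ≤ f - 1 by linarith) (show (0:ℝ) ≤ 2 - f by linarith) (by ring)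
  have e : (f-1) • f + (2-f) • (f+1) = 2 := by
    rw [smul_eq_mul, smul_eq_mul]; ring
  rw [e] at h
  simp only [Function.comp, Real.Gamma_two, Real.log_one, smul_eq_mul] at h
  rw [Real.Gamma_add_one (ne_of_gt hf0),
    Real.log_mul (ne_of_gt hf0) (ne_of_gt (Real.Gamma_pos_of_pos hf0))] at h
  have hlf0 : 0 ≤ Real.log f := Real.log_nonneg hf1
  have hlf1 : Real.log f ≤ 1 := by
    have := Real.log_le_sub_one_of_pos hf0; linarith
  nlinarith [h]

lemma phiS_small {f : ℝ} (hf1 : 1 ≤ f) (hf2 : f ≤ 2) :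
    -2 ≤ PhiS f ∧ PhiS f ≤ 1/2 := by
  unfold PhiS
  have hf0 : (0:ℝ) < f := by linarith
  have hlf0 : 0 ≤ Real.log f := Real.log_nonneg hf1
  have hlf1 : Real.log f ≤ 1 := by
    have := Real.log_le_sub_one_of_pos hf0; linarith
  constructor <;> nlinarith

lemma stirling_core {f : ℝ} (hf1 : 1 ≤ f) (hf2 : f ≤ 2) (m : ℕ) :
    |Real.log (Real.Gamma (f + m)) - PhiS (f + m)| ≤ 4 := by
  have hf0 : (0:ℝ) < f := by linarith
  have hkey : Real.log (Real.Gamma (f + m)) - PhiS (f + m)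
      = (Real.log (Real.Gamma f) - PhiS f)
        - ∑ k ∈ Finset.range m,
            (((f + k) + 1/2) * (Real.log ((f + k) + 1) - Real.log (f + k)) - 1) := by
    rw [logGamma_add_nat hf0, phiS_add_nat, Finset.sum_add_distrib]
    ring
  have hone : ∀ k : ℕ, (1:ℝ) ≤ f + k := fun k => by
    have : (0:ℝ) ≤ (k:ℝ) := Nat.cast_nonneg k
    linarith
  have hS0 : 0 ≤ ∑ k ∈ Finset.range m,
      (((f + k) + 1/2) * (Real.log ((f + k) + 1) - Real.log (f + k)) - 1) :=
    Finset.sum_nonneg (fun k _ => delta_nonneg (hone k))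
  have hS1 : ∑ k ∈ Finset.range m,
      (((f + k) + 1/2) * (Real.log ((f + k) + 1) - Real.log (f + k)) - 1) ≤ 1/4 := by
    have step : ∀ k ∈ Finset.range m,
        ((f + k) + 1/2) * (Real.log ((f + k) + 1) - Real.log (f + k)) - 1 ≤
          (fun k : ℕ => 1/(4*((k:ℝ)+1))) k - (fun k : ℕ => 1/(4*((k:ℝ)+1))) (k+1) := by
      intro k _
      have h1 := delta_le (hone k)
      have hk0 : (0:ℝ) ≤ (k:ℝ) := Nat.cast_nonneg k
      have h2 : 1/(4*(f+k)*((f+k)+1)) ≤ 1/(4*((k:ℝ)+1)*((k:ℝ)+2)) := by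
        apply one_div_le_one_div_of_le (by positivity)
        nlinarith [hone k]
      have h3 : (fun k : ℕ => 1/(4*((k:ℝ)+1))) k - (fun k : ℕ => 1/(4*((k:ℝ)+1))) (k+1)
          = 1/(4*((k:ℝ)+1)*((k:ℝ)+2)) := by
        simp only
        push_cast
        rw [div_sub_div _ _ (by positivity) (by positivity), div_eq_div_iff (by positivity) (by positivity)]
        ring
      rw [h3]
      linarith
    calc ∑ k ∈ Finset.range m,
        (((f + k) + 1/2) * (Real.log ((f + k) + 1) - Real.log (f + k)) - 1)
        ≤ ∑ k ∈ Finset.range m,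
            ((fun k : ℕ => 1/(4*((k:ℝ)+1))) k - (fun k : ℕ => 1/(4*((k:ℝ)+1))) (k+1)) :=
          Finset.sum_le_sum step
      _ = (fun k : ℕ => 1/(4*((k:ℝ)+1))) 0 - (fun k : ℕ => 1/(4*((k:ℝ)+1))) m :=
          Finset.sum_range_sub' _ m
      _ ≤ 1/4 := by
          simp only
          norm_num
          positivity
  have hub := logGamma_small_ub hf1 hf2
  have hlb := logGamma_small_lb hf1 hf2
  obtain ⟨hp1, hp2⟩ := phiS_small hf1 hf2
  rw [hkey, abs_le]
  constructor <;> linarith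

lemma stirling_bound {y : ℝ} (hy : 1 ≤ y) :
    |Real.log (Real.Gamma y) - PhiS y| ≤ 4 := by
  have hfl : (1:ℤ) ≤ ⌊y⌋ := by
    rw [Int.le_floor]
    exact_mod_cast hy
  set m : ℕ := (⌊y⌋ - 1).toNat with hm
  have hmz : ((m:ℕ):ℤ) = ⌊y⌋ - 1 := Int.toNat_of_nonneg (by omega)
  have hmr : ((m:ℕ):ℝ) = ((⌊y⌋:ℤ):ℝ) - 1 := by
    exact_mod_cast congrArg (Int.cast : ℤ → ℝ) hmz
  have hfloor_le := Int.floor_le y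
  have hlt := Int.lt_floor_add_one y
  have hf1 : 1 ≤ y - m := by rw [hmr]; linarith
  have hf2 : y - m ≤ 2 := by rw [hmr]; linarith
  have hfm : (y - m) + m = y := by ring
  calc |Real.log (Real.Gamma y) - PhiS y|
      = |Real.log (Real.Gamma ((y - m) + m)) - PhiS ((y - m) + m)| := by rw [hfm]
    _ ≤ 4 := stirling_core hf1 hf2 m

lemma logdiff1 {c lR : ℝ} (hc : 0 ≤ c) (hl : 2 ≤ lR) :
    0 ≤ Real.log (lR + c) - Real.log lR ∧
      Real.log (lR + c) - Real.log lR ≤ c/lR := by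
  have hl0 : (0:ℝ) < lR := by linarith
  constructor
  · exact sub_nonneg.mpr (Real.log_le_log hl0 (by linarith))
  · have h := Real.log_le_sub_one_of_pos (show (0:ℝ) < (lR + c)/lR by positivity)
    rw [Real.log_div (by positivity) (ne_of_gt hl0)] at h
    have he : (lR + c)/lR - 1 = c/lR := by field_simp; ring
    linarith

lemma logdiff {b c lR : ℝ} (hb : 0 < b) (hc : 0 ≤ c) (hl : 2 ≤ lR) :
    0 ≤ Real.log (b*lR + c) - (Real.log b + Real.log lR) ∧
      Real.log (b*lR + c) - (Real.log b + Real.log lR) ≤ c/(b*lR) := by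
  have hl0 : (0:ℝ) < lR := by linarith
  have he : b*(lR + c/b) = b*lR + c := by field_simp
  obtain ⟨h0, h1⟩ := logdiff1 (show 0 ≤ c/b by positivity) hl
  rw [← he, Real.log_mul (ne_of_gt hb) (by positivity)]
  rw [div_div] at h1
  constructor <;> linarith

end helpers


set_option maxHeartbeats 8000000 in
/-- Asymptotic evaluation of the Gamma-function expression controlling the imaginary
part of the quasinormal frequency: with `ν = ℓ + 1`,
`log G(ℓ) = −2ℓ log ℓ + ℓ(2 − μ log μ + (1+μ)log(1+μ) + log x) + (N − 3/2) log ℓ + O(1)`. -/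
theorem stmt11 (N : ℕ) (μ x : ℝ) (hμ : 0 < μ) (hx : 0 < x) :
    ∃ M : ℝ, ∀ ℓ : ℕ, 2 ≤ ℓ →
      |Real.log
          ((((N : ℝ) + ((ℓ : ℝ) + 1)) * Real.Gamma ((N : ℝ) + 1 + ((ℓ : ℝ) + 1) + μ * ℓ) *
              Real.Gamma ((N : ℝ) + ((ℓ : ℝ) + 1)) * Real.exp (2 * ((ℓ : ℝ) + 1)) *
              x ^ ((ℓ : ℝ) + 1)) /
            ((N.factorial : ℝ) * ((ℓ : ℝ) + 1) * Real.Gamma ((N : ℝ) + 1 + μ * ℓ) *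
              (Real.Gamma ((ℓ : ℝ) + 1)) ^ 2 * ((ℓ : ℝ) + 1) ^ (2 * ((ℓ : ℝ) + 1)))) -
        (-(2 * (ℓ : ℝ) * Real.log ℓ) +
          (ℓ : ℝ) * (2 - μ * Real.log μ + (1 + μ) * Real.log (1 + μ) + Real.log x) +
          ((N : ℝ) - 3/2) * Real.log ℓ)| ≤ M := by
  refine ⟨20 + (((N:ℝ)+2) + ((N:ℝ)+3/2)*((N:ℝ)+2)/(2*(1+μ)))
      + (((N:ℝ)+1) + ((N:ℝ)+1/2)*((N:ℝ)+1)/2)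
      + (((N:ℝ)+1) + ((N:ℝ)+1/2)*((N:ℝ)+1)/(2*μ))
      + 2*(1 + 1/4) + 3 + ((N:ℝ)+1)/2 + 1/2
      + |(((N:ℝ)+3/2)*Real.log (1+μ) - ((N:ℝ)+1/2)*Real.log μ + Real.log x + (2-(N:ℝ)) - Real.log (N.factorial:ℝ))|, ?_⟩
  intro ℓ hℓ
  have hl2 : (2:ℝ) ≤ (ℓ:ℝ) := by exact_mod_cast hℓ
  set lR := (ℓ:ℝ) with hlRdef
  have hl0 : (0:ℝ) < lR := by linarith
  have hμ1 : (0:ℝ) < 1 + μ := by linarith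
  have hN0 : (0:ℝ) ≤ (N:ℝ) := Nat.cast_nonneg N
  have hbl1 : (0:ℝ) < (1+μ)*lR := mul_pos hμ1 hl0
  have hbl3 : (0:ℝ) < μ*lR := mul_pos hμ hl0
  have hA1p : (0:ℝ) < (1+μ)*lR + ((N:ℝ)+2) := by linarith
  have hA2p : (0:ℝ) < lR + ((N:ℝ)+1) := by linarith
  have hA3p : (0:ℝ) < μ*lR + ((N:ℝ)+1) := by linarith
  have hνp : (0:ℝ) < lR + 1 := by linarith
  have hA1ge : (1:ℝ) ≤ (1+μ)*lR + ((N:ℝ)+2) := by linarith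
  have hA2ge : (1:ℝ) ≤ lR + ((N:ℝ)+1) := by linarith
  have hA3ge : (1:ℝ) ≤ μ*lR + ((N:ℝ)+1) := by linarith
  have hνge : (1:ℝ) ≤ lR + 1 := by linarith
  have hG1 : 0 < Real.Gamma ((1+μ)*lR + ((N:ℝ)+2)) := Real.Gamma_pos_of_pos hA1p
  have hG2 : 0 < Real.Gamma (lR + ((N:ℝ)+1)) := Real.Gamma_pos_of_pos hA2p
  have hG3 : 0 < Real.Gamma (μ*lR + ((N:ℝ)+1)) := Real.Gamma_pos_of_pos hA3p
  have hGν : 0 < Real.Gamma (lR + 1) := Real.Gamma_pos_of_pos hνp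
  have hF : (0:ℝ) < (N.factorial:ℝ) := by exact_mod_cast N.factorial_pos
  rw [show (N:ℝ) + 1 + (lR + 1) + μ*lR = (1+μ)*lR + ((N:ℝ)+2) from by ring,
      show (N:ℝ) + (lR + 1) = lR + ((N:ℝ)+1) from by ring,
      show (N:ℝ) + 1 + μ*lR = μ*lR + ((N:ℝ)+1) from by ring]
  have hexp : Real.log (((lR + ((N:ℝ)+1)) * Real.Gamma ((1+μ)*lR + ((N:ℝ)+2)) *
        Real.Gamma (lR + ((N:ℝ)+1)) * Real.exp (2*(lR + 1)) * x ^ (lR + 1)) /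
        ((N.factorial:ℝ) * (lR + 1) * Real.Gamma (μ*lR + ((N:ℝ)+1)) *
          (Real.Gamma (lR + 1)) ^ 2 * (lR + 1) ^ (2*(lR + 1))))
      = Real.log (lR + ((N:ℝ)+1)) + Real.log (Real.Gamma ((1+μ)*lR + ((N:ℝ)+2))) + Real.log (Real.Gamma (lR + ((N:ℝ)+1))) + 2*(lR + 1) + (lR + 1)*Real.log x - (Real.log ((N.factorial:ℝ)) + Real.log (lR + 1) + Real.log (Real.Gamma (μ*lR + ((N:ℝ)+1))) + 2*Real.log (Real.Gamma (lR + 1)) + (2*(lR + 1))*Real.log (lR + 1)) := by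
    rw [Real.log_div
        (ne_of_gt (mul_pos (mul_pos (mul_pos (mul_pos hA2p hG1) hG2) (Real.exp_pos _))
          (Real.rpow_pos_of_pos hx _)))
        (ne_of_gt (mul_pos (mul_pos (mul_pos (mul_pos hF hνp) hG3) (pow_pos hGν 2))
          (Real.rpow_pos_of_pos hνp _))),
      Real.log_mul (ne_of_gt (mul_pos (mul_pos (mul_pos hA2p hG1) hG2) (Real.exp_pos _)))
        (ne_of_gt (Real.rpow_pos_of_pos hx _)),
      Real.log_mul (ne_of_gt (mul_pos (mul_pos hA2p hG1) hG2)) (ne_of_gt (Real.exp_pos _)),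
      Real.log_mul (ne_of_gt (mul_pos hA2p hG1)) (ne_of_gt hG2),
      Real.log_mul (ne_of_gt hA2p) (ne_of_gt hG1),
      Real.log_exp, Real.log_rpow hx,
      Real.log_mul (ne_of_gt (mul_pos (mul_pos (mul_pos hF hνp) hG3) (pow_pos hGν 2)))
        (ne_of_gt (Real.rpow_pos_of_pos hνp _)),
      Real.log_mul (ne_of_gt (mul_pos (mul_pos hF hνp) hG3)) (ne_of_gt (pow_pos hGν 2)),
      Real.log_mul (ne_of_gt (mul_pos hF hνp)) (ne_of_gt hG3),
      Real.log_mul (ne_of_gt hF) (ne_of_gt hνp),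
      Real.log_pow, Real.log_rpow hνp]
    push_cast
    ring
  rw [hexp]
  -- Stirling bounds
  have hd1 : |(Real.log (Real.Gamma ((1+μ)*lR + ((N:ℝ)+2))) - ((((1+μ)*lR + ((N:ℝ)+2)) - 1/2) * Real.log ((1+μ)*lR + ((N:ℝ)+2)) - ((1+μ)*lR + ((N:ℝ)+2))))| ≤ 4 := stirling_bound hA1ge
  have hd2 : |(Real.log (Real.Gamma (lR + ((N:ℝ)+1))) - (((lR + ((N:ℝ)+1)) - 1/2) * Real.log (lR + ((N:ℝ)+1)) - (lR + ((N:ℝ)+1))))| ≤ 4 := stirling_bound hA2ge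
  have hd3 : |(Real.log (Real.Gamma (μ*lR + ((N:ℝ)+1))) - (((μ*lR + ((N:ℝ)+1)) - 1/2) * Real.log (μ*lR + ((N:ℝ)+1)) - (μ*lR + ((N:ℝ)+1))))| ≤ 4 := stirling_bound hA3ge
  have hd4 : |(Real.log (Real.Gamma (lR + 1)) - (((lR + 1) - 1/2) * Real.log (lR + 1) - (lR + 1)))| ≤ 4 := stirling_bound hνge
  obtain ⟨hd1a, hd1b⟩ := abs_le.mp hd1
  obtain ⟨hd2a, hd2b⟩ := abs_le.mp hd2
  obtain ⟨hd3a, hd3b⟩ := abs_le.mp hd3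
  obtain ⟨hd4a, hd4b⟩ := abs_le.mp hd4
  -- remainder bounds
  have hr1 : |(((1+μ)*lR + ((N:ℝ)+3/2)) * (Real.log ((1+μ)*lR + ((N:ℝ)+2)) - (Real.log (1+μ) + Real.log lR)))| ≤ ((N:ℝ)+2) + ((N:ℝ)+3/2)*((N:ℝ)+2)/(2*(1+μ)) := by
    obtain ⟨h0, h1⟩ := logdiff hμ1 (show (0:ℝ) ≤ (N:ℝ)+2 by linarith) hl2
    rw [abs_mul, abs_of_nonneg h0,
      abs_of_nonneg (show (0:ℝ) ≤ (1+μ)*lR + ((N:ℝ)+3/2) by linarith)]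
    calc ((1+μ)*lR + ((N:ℝ)+3/2)) * (Real.log ((1+μ)*lR + ((N:ℝ)+2)) - (Real.log (1+μ) + Real.log lR))
        ≤ ((1+μ)*lR + ((N:ℝ)+3/2)) * (((N:ℝ)+2)/((1+μ)*lR)) :=
          mul_le_mul_of_nonneg_left h1 (by linarith)
      _ = ((N:ℝ)+2) + ((N:ℝ)+3/2)*(((N:ℝ)+2)/((1+μ)*lR)) := by
          field_simp
      _ ≤ ((N:ℝ)+2) + ((N:ℝ)+3/2)*((N:ℝ)+2)/(2*(1+μ)) := by
          have h2 : ((N:ℝ)+2)/((1+μ)*lR) ≤ ((N:ℝ)+2)/(2*(1+μ)) :=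
            div_le_div_of_nonneg_left (by linarith) (by linarith) (by nlinarith)
          have h3 := mul_le_mul_of_nonneg_left h2 (show (0:ℝ) ≤ (N:ℝ)+3/2 by linarith)
          rw [mul_div_assoc]
          linarith
  have hr2 : |((lR + ((N:ℝ)+1/2)) * (Real.log (lR + ((N:ℝ)+1)) - Real.log lR))| ≤ ((N:ℝ)+1) + ((N:ℝ)+1/2)*((N:ℝ)+1)/2 := by
    obtain ⟨h0, h1⟩ := logdiff1 (show (0:ℝ) ≤ (N:ℝ)+1 by linarith) hl2
    rw [abs_mul, abs_of_nonneg h0,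
      abs_of_nonneg (show (0:ℝ) ≤ lR + ((N:ℝ)+1/2) by linarith)]
    calc (lR + ((N:ℝ)+1/2)) * (Real.log (lR + ((N:ℝ)+1)) - Real.log lR)
        ≤ (lR + ((N:ℝ)+1/2)) * (((N:ℝ)+1)/lR) :=
          mul_le_mul_of_nonneg_left h1 (by linarith)
      _ = ((N:ℝ)+1) + ((N:ℝ)+1/2)*(((N:ℝ)+1)/lR) := by
          field_simp
      _ ≤ ((N:ℝ)+1) + ((N:ℝ)+1/2)*((N:ℝ)+1)/2 := by
          have h2 : ((N:ℝ)+1)/lR ≤ ((N:ℝ)+1)/2 :=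
            div_le_div_of_nonneg_left (by linarith) (by linarith) hl2
          have h3 := mul_le_mul_of_nonneg_left h2 (show (0:ℝ) ≤ (N:ℝ)+1/2 by linarith)
          rw [mul_div_assoc]
          linarith
  have hr3 : |((μ*lR + ((N:ℝ)+1/2)) * (Real.log (μ*lR + ((N:ℝ)+1)) - (Real.log μ + Real.log lR)))| ≤ ((N:ℝ)+1) + ((N:ℝ)+1/2)*((N:ℝ)+1)/(2*μ) := by
    obtain ⟨h0, h1⟩ := logdiff hμ (show (0:ℝ) ≤ (N:ℝ)+1 by linarith) hl2
    rw [abs_mul, abs_of_nonneg h0,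
      abs_of_nonneg (show (0:ℝ) ≤ μ*lR + ((N:ℝ)+1/2) by linarith)]
    calc (μ*lR + ((N:ℝ)+1/2)) * (Real.log (μ*lR + ((N:ℝ)+1)) - (Real.log μ + Real.log lR))
        ≤ (μ*lR + ((N:ℝ)+1/2)) * (((N:ℝ)+1)/(μ*lR)) :=
          mul_le_mul_of_nonneg_left h1 (by linarith)
      _ = ((N:ℝ)+1) + ((N:ℝ)+1/2)*(((N:ℝ)+1)/(μ*lR)) := by
          field_simp
      _ ≤ ((N:ℝ)+1) + ((N:ℝ)+1/2)*((N:ℝ)+1)/(2*μ) := by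
          have h2 : ((N:ℝ)+1)/(μ*lR) ≤ ((N:ℝ)+1)/(2*μ) :=
            div_le_div_of_nonneg_left (by linarith) (by linarith) (by nlinarith)
          have h3 := mul_le_mul_of_nonneg_left h2 (show (0:ℝ) ≤ (N:ℝ)+1/2 by linarith)
          rw [mul_div_assoc]
          linarith
  have hr4 : |((lR + 1/2) * (Real.log (lR + 1) - Real.log lR))| ≤ 1 + 1/4 := by
    obtain ⟨h0, h1⟩ := logdiff1 (show (0:ℝ) ≤ (1:ℝ) by norm_num) hl2
    rw [abs_mul, abs_of_nonneg h0,
      abs_of_nonneg (show (0:ℝ) ≤ lR + 1/2 by linarith)]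
    calc (lR + 1/2) * (Real.log (lR + 1) - Real.log lR)
        ≤ (lR + 1/2) * (1/lR) := mul_le_mul_of_nonneg_left h1 (by linarith)
      _ = 1 + 1/(2*lR) := by field_simp; try ring
      _ ≤ 1 + 1/4 := by
          have : 1/(2*lR) ≤ 1/4 := by
            rw [div_le_div_iff₀ (by linarith) (by norm_num)]
            linarith
          linarith
  have hr5 : |((2*lR + 2) * (Real.log (lR + 1) - Real.log lR))| ≤ 3 := by
    obtain ⟨h0, h1⟩ := logdiff1 (show (0:ℝ) ≤ (1:ℝ) by norm_num) hl2
    rw [abs_mul, abs_of_nonneg h0,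
      abs_of_nonneg (show (0:ℝ) ≤ 2*lR + 2 by linarith)]
    calc (2*lR + 2) * (Real.log (lR + 1) - Real.log lR)
        ≤ (2*lR + 2) * (1/lR) := mul_le_mul_of_nonneg_left h1 (by linarith)
      _ = 2 + 2/lR := by field_simp; try ring
      _ ≤ 3 := by
          have : 2/lR ≤ 1 := by
            rw [div_le_iff₀ (by linarith)]
            linarith
          linarith
  have hs1 : |(Real.log (lR + ((N:ℝ)+1)) - Real.log lR)| ≤ ((N:ℝ)+1)/2 := by
    obtain ⟨h0, h1⟩ := logdiff1 (show (0:ℝ) ≤ (N:ℝ)+1 by linarith) hl2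
    rw [abs_of_nonneg h0]
    calc Real.log (lR + ((N:ℝ)+1)) - Real.log lR ≤ ((N:ℝ)+1)/lR := h1
      _ ≤ ((N:ℝ)+1)/2 := div_le_div_of_nonneg_left (by linarith) (by norm_num) hl2
  have hs2 : |(Real.log (lR + 1) - Real.log lR)| ≤ 1/2 := by
    obtain ⟨h0, h1⟩ := logdiff1 (show (0:ℝ) ≤ (1:ℝ) by norm_num) hl2
    rw [abs_of_nonneg h0]
    calc Real.log (lR + 1) - Real.log lR ≤ 1/lR := h1
      _ ≤ 1/2 := by
          rw [div_le_div_iff₀ (by linarith) (by norm_num)]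
          linarith
  obtain ⟨hr1a, hr1b⟩ := abs_le.mp hr1
  obtain ⟨hr2a, hr2b⟩ := abs_le.mp hr2
  obtain ⟨hr3a, hr3b⟩ := abs_le.mp hr3
  obtain ⟨hr4a, hr4b⟩ := abs_le.mp hr4
  obtain ⟨hr5a, hr5b⟩ := abs_le.mp hr5
  obtain ⟨hs1a, hs1b⟩ := abs_le.mp hs1
  obtain ⟨hs2a, hs2b⟩ := abs_le.mp hs2
  have hKa : -|(((N:ℝ)+3/2)*Real.log (1+μ) - ((N:ℝ)+1/2)*Real.log μ + Real.log x + (2-(N:ℝ)) - Real.log (N.factorial:ℝ))| ≤ (((N:ℝ)+3/2)*Real.log (1+μ) - ((N:ℝ)+1/2)*Real.log μ + Real.log x + (2-(N:ℝ)) - Real.log (N.factorial:ℝ)) := neg_abs_le _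
  have hKb : (((N:ℝ)+3/2)*Real.log (1+μ) - ((N:ℝ)+1/2)*Real.log μ + Real.log x + (2-(N:ℝ)) - Real.log (N.factorial:ℝ)) ≤ |(((N:ℝ)+3/2)*Real.log (1+μ) - ((N:ℝ)+1/2)*Real.log μ + Real.log x + (2-(N:ℝ)) - Real.log (N.factorial:ℝ))| := le_abs_self _
  have key : (Real.log (lR + ((N:ℝ)+1)) + Real.log (Real.Gamma ((1+μ)*lR + ((N:ℝ)+2))) + Real.log (Real.Gamma (lR + ((N:ℝ)+1))) + 2*(lR + 1) + (lR + 1)*Real.log x - (Real.log ((N.factorial:ℝ)) + Real.log (lR + 1) + Real.log (Real.Gamma (μ*lR + ((N:ℝ)+1))) + 2*Real.log (Real.Gamma (lR + 1)) + (2*(lR + 1))*Real.log (lR + 1))) -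
      (-(2 * lR * Real.log lR) + lR * (2 - μ * Real.log μ + (1 + μ) * Real.log (1 + μ) + Real.log x) + ((N:ℝ) - 3/2) * Real.log lR)
      = (Real.log (Real.Gamma ((1+μ)*lR + ((N:ℝ)+2))) - ((((1+μ)*lR + ((N:ℝ)+2)) - 1/2) * Real.log ((1+μ)*lR + ((N:ℝ)+2)) - ((1+μ)*lR + ((N:ℝ)+2)))) + (Real.log (Real.Gamma (lR + ((N:ℝ)+1))) - (((lR + ((N:ℝ)+1)) - 1/2) * Real.log (lR + ((N:ℝ)+1)) - (lR + ((N:ℝ)+1)))) - (Real.log (Real.Gamma (μ*lR + ((N:ℝ)+1))) - (((μ*lR + ((N:ℝ)+1)) - 1/2) * Real.log (μ*lR + ((N:ℝ)+1)) - (μ*lR + ((N:ℝ)+1)))) - 2*(Real.log (Real.Gamma (lR + 1)) - (((lR + 1) - 1/2) * Real.log (lR + 1) - (lR + 1)))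
        + (((1+μ)*lR + ((N:ℝ)+3/2)) * (Real.log ((1+μ)*lR + ((N:ℝ)+2)) - (Real.log (1+μ) + Real.log lR))) + ((lR + ((N:ℝ)+1/2)) * (Real.log (lR + ((N:ℝ)+1)) - Real.log lR)) - ((μ*lR + ((N:ℝ)+1/2)) * (Real.log (μ*lR + ((N:ℝ)+1)) - (Real.log μ + Real.log lR))) - 2*((lR + 1/2) * (Real.log (lR + 1) - Real.log lR)) - ((2*lR + 2) * (Real.log (lR + 1) - Real.log lR)) + (Real.log (lR + ((N:ℝ)+1)) - Real.log lR) - (Real.log (lR + 1) - Real.log lR) + (((N:ℝ)+3/2)*Real.log (1+μ) - ((N:ℝ)+1/2)*Real.log μ + Real.log x + (2-(N:ℝ)) - Real.log (N.factorial:ℝ)) := by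
    ring
  rw [abs_le]
  constructor
  · linarith [key, hd1a, hd2a, hd3b, hd4b, hr1a, hr2a, hr3b, hr4b, hr5b, hs1a, hs2b, hKa,
      hd3a, hd4a, hr3a, hr4a, hr5a, hs2a, hd1b, hd2b, hr1b, hr2b, hs1b, hKb]
  · linarith [key, hd1a, hd2a, hd3b, hd4b, hr1a, hr2a, hr3b, hr4b, hr5b, hs1a, hs2b, hKa,
      hd3a, hd4a, hr3a, hr4a, hr5a, hs2a, hd1b, hd2b, hr1b, hr2b, hs1b, hKb]
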